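/- Let p be a prime. For all 0 ≤ i, j ≤ p−1 one has Σ_{k=0}^{p−1} binom(p−1−i, k) · binom(j, p−1−k) ≡ δ_{i,j} (mod p), where δ_{i,j} is 1 if i = j and 0 otherwise. Equivalently, the p × p matrices T = (binom(p−1−i, j))_{0 ≤ i,j ≤ p−1} and T' = (binom(j, p−1−i))_{0 ≤ i,j ≤ p−1} over ZMod p satisfy T · T' = 1; i.e., the inverse of T is obtained from T by transposition with respect to the secondary diagonal. -/

import Mathlib

lemma key_sum (p i j : ℕ) (hp : p.Prime) (hi : i ≤ p - 1) (hj : j ≤ p - 1) :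
    ((∑ k ∈ Finset.range p,
        Nat.choose (p - 1 - i) k * Nat.choose j (p - 1 - k) : ℕ) : ZMod p) =
      if i = j then 1 else 0 := by
  have hp1 : 1 ≤ p := hp.one_lt.le
  have hsum : (∑ k ∈ Finset.range p,
      Nat.choose (p - 1 - i) k * Nat.choose j (p - 1 - k)) =
      Nat.choose (p - 1 - i + j) (p - 1) := by
    rw [Nat.add_choose_eq, Finset.Nat.sum_antidiagonal_eq_sum_range_succ_mk,
      Nat.succ_eq_add_one, Nat.sub_add_cancel hp1]
  rw [hsum]
  rcases lt_trichotomy i j with h | h | h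
  · have hd : p ∣ Nat.choose (p - 1 - i + j) (p - 1) := by
      apply hp.dvd_choose (by omega) (by omega) (by omega)
    rw [if_neg h.ne]
    exact (ZMod.natCast_eq_zero_iff _ _).2 hd
  · subst h
    rw [if_pos rfl, Nat.sub_add_cancel hj, Nat.choose_self, Nat.cast_one]
  · rw [if_neg h.ne', Nat.choose_eq_zero_of_lt (by omega), Nat.cast_zero]



/-- for a prime `p` and `0 ≤ i, j ≤ p−1`,
`Σ_{k=0}^{p−1} binom(p−1−i, k) · binom(j, p−1−k) ≡ δ_{i,j} (mod p)`; equivalently, the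
`p × p` matrices `T = (binom(p−1−i, j))` and `T' = (binom(j, p−1−i))` over `ZMod p`
satisfy `T · T' = 1`, i.e. the inverse of `T` is obtained from `T` by transposition with
respect to the secondary diagonal. -/
theorem binom_secondary_diagonal_inverse (p : ℕ) (hp : p.Prime) :
    (∀ i ≤ p - 1, ∀ j ≤ p - 1,
      ((∑ k ∈ Finset.range p,
          Nat.choose (p - 1 - i) k * Nat.choose j (p - 1 - k) : ℕ) : ZMod p) =
        if i = j then 1 else 0) ∧
    (Matrix.of fun i j : Fin p => ((Nat.choose (p - 1 - (i : ℕ)) (j : ℕ) : ℕ) : ZMod p)) *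
        (Matrix.of fun i j : Fin p =>
          ((Nat.choose (j : ℕ) (p - 1 - (i : ℕ)) : ℕ) : ZMod p)) = 1 := by
  refine ⟨fun i hi j hj => key_sum p i j hp hi hj, ?_⟩
  ext i j
  rw [Matrix.mul_apply, Matrix.one_apply]
  have hi : (i : ℕ) ≤ p - 1 := by omega
  have hj : (j : ℕ) ≤ p - 1 := by omega
  have := key_sum p i j hp hi hj
  push_cast at this
  simp only [Matrix.of_apply]
  rw [Finset.sum_congr rfl fun k _ => rfl, ← Fin.sum_univ_eq_sum_range
    (fun k => ((Nat.choose (p - 1 - (i : ℕ)) k : ℕ) : ZMod p) *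
      ((Nat.choose (j : ℕ) (p - 1 - k) : ℕ) : ZMod p)) p] at this
  rw [this]
  simp [Fin.ext_iff]
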